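/- Let T be a tournament with at least 4 vertices. Then T is BK-colorable (admits a 2-coloring of its arcs so that the resulting bicolored digraph has a bikernel by monochromatic paths) if and only if T is strongly connected. -/

import Mathlib

/-- A bicolored digraph is given by two arc relations `A1` (color-1 arcs) and `A2`
(color-2 arcs). A monochromatic path of color `i` is a nonempty chain of `Ai`-arcs,
i.e. `Relation.TransGen Ai`. A set `B` is a bikernel by monochromatic paths if it is
nonempty, independent by monochromatic paths, absorbent with color 1 and dominant
with color 2. -/
def IsBikernel {V : Type*} (A1 A2 : V → V → Prop) (B : Set V) : Prop :=
  B.Nonempty ∧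
  (∀ u ∈ B, ∀ v ∈ B, u ≠ v →
    ¬ Relation.TransGen A1 u v ∧ ¬ Relation.TransGen A2 u v) ∧
  (∀ v, v ∉ B → ∃ b ∈ B, Relation.TransGen A1 v b) ∧
  (∀ v, v ∉ B → ∃ b ∈ B, Relation.TransGen A2 b v)

/-- A digraph `A` is BK-colorable if some 2-coloring of its arcs yields a bicolored
digraph with a bikernel. -/
def BKColorable {V : Type*} (A : V → V → Prop) : Prop :=
  ∃ c : V → V → Fin 2, ∃ B, IsBikernel
    (fun u v => A u v ∧ c u v = 0) (fun u v => A u v ∧ c u v = 1) B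

namespace BKAux

open Relation Finset

variable {V : Type*}

/-- `b` together with a coloring `c` witnesses BK-colorability with bikernel `{b}`:
every other vertex reaches `b` by a color-0 path and is reached from `b` by a
color-1 path. -/
def GoodAt (A : V → V → Prop) (b : V) (c : V → V → Fin 2) : Prop :=
  (∀ v, v ≠ b → Relation.TransGen (fun u w => A u w ∧ c u w = 0) v b) ∧
  (∀ v, v ≠ b → Relation.TransGen (fun u w => A u w ∧ c u w = 1) b v)

theorem good_bk {A : V → V → Prop} {b : V} {c : V → V → Fin 2}
    (h : GoodAt A b c) : BKColorable A := by
  refine ⟨c, {b}, ⟨b, rfl⟩, ?_, ?_, ?_⟩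
  · rintro u rfl v rfl hne; exact absurd rfl hne
  · intro v hv
    exact ⟨b, rfl, h.1 v hv⟩
  · intro v hv
    exact ⟨b, rfl, h.2 v hv⟩

theorem bk_strong {A : V → V → Prop}
    (htour : ∀ u v : V, u ≠ v → Xor' (A u v) (A v u))
    (h : BKColorable A) : ∀ u v : V, Relation.ReflTransGen A u v := by
  obtain ⟨c, B, ⟨b, hbB⟩, hind, habs, hdom⟩ := h
  have fin2 : ∀ x : Fin 2, x = 0 ∨ x = 1 := by decide
  -- every element of B equals b
  have hB : ∀ w ∈ B, w = b := by
    intro w hw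
    by_contra hne
    rcases htour w b hne with ⟨hwb, -⟩ | ⟨hbw, -⟩
    · rcases fin2 (c w b) with h0 | h1
      · exact (hind w hw b hbB hne).1 (TransGen.single ⟨hwb, h0⟩)
      · exact (hind w hw b hbB hne).2 (TransGen.single ⟨hwb, h1⟩)
    · rcases fin2 (c b w) with h0 | h1
      · exact (hind b hbB w hw (Ne.symm hne)).1 (TransGen.single ⟨hbw, h0⟩)
      · exact (hind b hbB w hw (Ne.symm hne)).2 (TransGen.single ⟨hbw, h1⟩)
  intro u v
  have h1 : Relation.ReflTransGen A u b := by
    by_cases hu : u = b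
    · exact hu ▸ Relation.ReflTransGen.refl
    · have huB : u ∉ B := fun h => hu (hB u h)
      obtain ⟨b', hb', hp⟩ := habs u huB
      have : b' = b := hB b' hb'
      subst this
      exact (Relation.TransGen.mono (fun x y (h : _ ∧ _) => h.1) _ _ hp).to_reflTransGen
  have h2 : Relation.ReflTransGen A b v := by
    by_cases hv : v = b
    · exact hv ▸ Relation.ReflTransGen.refl
    · have hvB : v ∉ B := fun h => hv (hB v h)
      obtain ⟨b', hb', hp⟩ := hdom v hvB
      have : b' = b := hB b' hb'
      subst this
      exact (Relation.TransGen.mono (fun x y (h : _ ∧ _) => h.1) _ _ hp).to_reflTransGen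
  exact h1.trans h2

theorem exists_out {A : V → V → Prop}
    (hstrong : ∀ u v : V, Relation.ReflTransGen A u v) {z w : V} (hzw : z ≠ w) :
    ∃ q, A z q := by
  rcases (hstrong z w).cases_head with h | ⟨d, hd, -⟩
  · exact absurd h hzw
  · exact ⟨d, hd⟩

theorem exists_in {A : V → V → Prop}
    (hstrong : ∀ u v : V, Relation.ReflTransGen A u v) {z w : V} (hzw : w ≠ z) :
    ∃ p, A p z := by
  rcases (hstrong w z).cases_tail with h | ⟨d, -, hd⟩
  · exact absurd h.symm hzw
  · exact ⟨d, hd⟩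

theorem exists_triangle {A : V → V → Prop}
    (htour : ∀ u v : V, u ≠ v → Xor' (A u v) (A v u)) (hirr : ∀ v, ¬ A v v)
    (hstrong : ∀ u v : V, Relation.ReflTransGen A u v)
    (hV : ∃ a b : V, a ≠ b) :
    ∃ u x y : V, A u x ∧ A x y ∧ A y u := by
  obtain ⟨a, b, hab⟩ := hV
  obtain ⟨q, haq⟩ := exists_out hstrong hab
  have key : ∀ s, Relation.ReflTransGen A s a → A a s → ∃ u x y : V, A u x ∧ A x y ∧ A y u := by
    intro s hs
    induction hs using Relation.ReflTransGen.head_induction_on with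
    | refl => intro h; exact absurd h (hirr a)
    | @head x d harc hpath ih =>
      intro hax
      by_cases hd : d = a
      · have harc' : A x a := hd ▸ harc
        have hxa : x ≠ a := fun h => hirr a (h ▸ hax)
        rcases htour a x hxa.symm with ⟨-, hn⟩ | ⟨-, hn⟩
        · exact absurd harc' hn
        · exact absurd hax hn
      · rcases htour a d (Ne.symm hd) with ⟨had, -⟩ | ⟨hda, -⟩
        · exact ih had
        · exact ⟨a, x, d, hax, harc, hda⟩
  exact key q (hstrong q a) haq

/-- Strong connectivity of the subtournament induced on a finset. -/
def StrongOn (A : V → V → Prop) (S : Finset V) : Prop :=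
  ∀ a ∈ S, ∀ b ∈ S, Relation.ReflTransGen (fun u w => A u w ∧ u ∈ S ∧ w ∈ S) a b

theorem lift_path {A : V → V → Prop} {v : V} {S : Finset V} (hv : ∀ w ∈ S, w ≠ v)
    {a b : V} (h : Relation.ReflTransGen (fun u w => A u w ∧ u ∈ S ∧ w ∈ S) a b)
    (ha : a ≠ v) (hb : b ≠ v) :
    Relation.ReflTransGen (fun p q : {w : V // w ≠ v} => A p.1 q.1) ⟨a, ha⟩ ⟨b, hb⟩ := by
  revert ha
  induction h using Relation.ReflTransGen.head_induction_on with
  | refl => intro ha; exact Relation.ReflTransGen.refl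
  | @head x d harc hpath ih =>
    intro ha
    exact Relation.ReflTransGen.head (show A x d from harc.1) (ih (hv d harc.2.2))

theorem delete_vertex_strong [Fintype V] {A : V → V → Prop}
    (htour : ∀ u v : V, u ≠ v → Xor' (A u v) (A v u)) (hirr : ∀ v, ¬ A v v)
    (hcard : 5 ≤ Fintype.card V)
    (hstrong : ∀ u v : V, Relation.ReflTransGen A u v) :
    ∃ v : V, ∀ a b : {w : V // w ≠ v},
      Relation.ReflTransGen (fun p q : {w : V // w ≠ v} => A p.1 q.1) a b := by
  classical
  have ne_of_arc : ∀ {a w : V}, A a w → a ≠ w := fun h h' => hirr _ (h' ▸ h)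
  have hpair : ∃ a b : V, a ≠ b := by
    have h1 : 1 < Fintype.card V := by omega
    have hne : Nonempty V := Fintype.card_pos_iff.mp (by omega)
    obtain ⟨a0⟩ := hne
    obtain ⟨a, ha⟩ := Fintype.exists_ne_of_one_lt_card h1 a0
    exact ⟨a, _, ha⟩
  obtain ⟨u, x0, y0, hux, hxy, hyu⟩ := exists_triangle htour hirr hstrong hpair
  set P : Finset V → Prop := fun S =>
    S.Nonempty ∧ S.card ≤ Fintype.card V - 1 ∧ StrongOn A S with hP
  have hseedStrong : StrongOn A {u, x0, y0} := by
    have hu : u ∈ ({u, x0, y0} : Finset V) := by simp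
    have hx : x0 ∈ ({u, x0, y0} : Finset V) := by simp
    have hy : y0 ∈ ({u, x0, y0} : Finset V) := by simp
    have harc : ∀ {a e : V}, A a e → a ∈ ({u, x0, y0} : Finset V) →
        e ∈ ({u, x0, y0} : Finset V) →
        Relation.ReflTransGen
          (fun s t => A s t ∧ s ∈ ({u, x0, y0} : Finset V) ∧ t ∈ ({u, x0, y0} : Finset V)) a e :=
      fun h ha he => Relation.ReflTransGen.single ⟨h, ha, he⟩
    intro a ha e he
    simp only [Finset.mem_insert, Finset.mem_singleton] at ha he
    rcases ha with rfl | rfl | rfl <;> rcases he with rfl | rfl | rfl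
    · exact Relation.ReflTransGen.refl
    · exact harc hux hu hx
    · exact (harc hux hu hx).trans (harc hxy hx hy)
    · exact (harc hxy hx hy).trans (harc hyu hy hu)
    · exact Relation.ReflTransGen.refl
    · exact harc hxy hx hy
    · exact harc hyu hy hu
    · exact (harc hyu hy hu).trans (harc hux hu hx)
    · exact Relation.ReflTransGen.refl
  have hseed : P {u, x0, y0} := by
    refine ⟨⟨u, by simp⟩, ?_, hseedStrong⟩
    have hxy2 : ({x0, y0} : Finset V).card ≤ 2 :=
      (Finset.card_insert_le _ _).trans (by simp)
    have h3 : ({u, x0, y0} : Finset V).card ≤ 3 :=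
      (Finset.card_insert_le _ _).trans (by omega)
    omega
  obtain ⟨S, hSmem, hSmax⟩ := Finset.exists_max_image
    ((Finset.univ : Finset (Finset V)).filter P) Finset.card
    ⟨{u, x0, y0}, Finset.mem_filter.mpr ⟨Finset.mem_univ _, hseed⟩⟩
  obtain ⟨hSne, hScard, hSstrong⟩ := (Finset.mem_filter.mp hSmem).2
  have hmax : ∀ T : Finset V, P T → T.card ≤ S.card := fun T hT =>
    hSmax T (Finset.mem_filter.mpr ⟨Finset.mem_univ _, hT⟩)
  obtain ⟨s₀, hs₀⟩ := hSne
  by_cases hbig : S.card = Fintype.card V - 1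
  · have hcompl : (Finset.univ \ S).card = 1 := by
      rw [Finset.card_sdiff_of_subset (Finset.subset_univ S), Finset.card_univ]
      omega
    obtain ⟨v, hv⟩ := Finset.card_eq_one.mp hcompl
    have hvS : v ∉ S := by
      have hvv : v ∈ Finset.univ \ S := hv ▸ Finset.mem_singleton_self v
      exact (Finset.mem_sdiff.mp hvv).2
    have hSv : ∀ w ∈ S, w ≠ v := fun w hw h => hvS (h ▸ hw)
    have hmem : ∀ w : V, w ≠ v → w ∈ S := by
      intro w hw
      by_contra hwS
      have hww : w ∈ Finset.univ \ S := Finset.mem_sdiff.mpr ⟨Finset.mem_univ _, hwS⟩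
      rw [hv] at hww
      exact hw (Finset.mem_singleton.mp hww)
    exact ⟨v, fun a e =>
      lift_path hSv (hSstrong a.1 (hmem a.1 a.2) e.1 (hmem e.1 e.2)) a.2 e.2⟩
  · have hScard2 : S.card ≤ Fintype.card V - 2 := by omega
    obtain ⟨z₀, hz₀⟩ : ∃ z, z ∉ S := by
      by_contra h
      push_neg at h
      have hsub : Finset.univ ⊆ S := fun w _ => h w
      have := Finset.card_le_card hsub
      rw [Finset.card_univ] at this
      omega
    have hhomog : ∀ z, z ∉ S → (∀ s ∈ S, A s z) ∨ (∀ s ∈ S, A z s) := by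
      intro z hz
      by_contra h
      push_neg at h
      obtain ⟨⟨sp, hsp, hspz⟩, ⟨sq, hsq, hsqz⟩⟩ := h
      have hzsp : A z sp := by
        rcases htour z sp (fun h' => hz (h' ▸ hsp)) with ⟨h', -⟩ | ⟨h', -⟩
        · exact h'
        · exact absurd h' hspz
      have hsqz' : A sq z := by
        rcases htour sq z (fun h' => hz (h'.symm ▸ hsq)) with ⟨h', -⟩ | ⟨h', -⟩
        · exact h'
        · exact absurd h' hsqz
      have hzins : StrongOn A (insert z S) := by
        have liftS : ∀ {a e : V}, a ∈ S → e ∈ S →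
            Relation.ReflTransGen
              (fun s t => A s t ∧ s ∈ insert z S ∧ t ∈ insert z S) a e :=
          fun ha he => Relation.ReflTransGen.mono
            (fun s t (h' : _ ∧ _ ∈ S ∧ _ ∈ S) => ⟨h'.1, Finset.mem_insert_of_mem h'.2.1,
              Finset.mem_insert_of_mem h'.2.2⟩) _ _ (hSstrong _ ha _ he)
        intro a ha e he
        rcases Finset.mem_insert.mp ha with rfl | ha' <;>
          rcases Finset.mem_insert.mp he with rfl | he'
        · exact Relation.ReflTransGen.refl
        · exact Relation.ReflTransGen.head
            ⟨hzsp, Finset.mem_insert_self _ _, Finset.mem_insert_of_mem hsp⟩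
            (liftS hsp he')
        · exact Relation.ReflTransGen.tail (liftS ha' hsq)
            ⟨hsqz', Finset.mem_insert_of_mem hsq, Finset.mem_insert_self _ _⟩
        · exact liftS ha' he'
      have hcge : (insert z S).card ≤ S.card := by
        refine hmax _ ⟨⟨z, Finset.mem_insert_self _ _⟩, ?_, hzins⟩
        rw [Finset.card_insert_of_notMem hz]
        omega
      rw [Finset.card_insert_of_notMem hz] at hcge
      omega
    have crossIn : ∀ a : V, Relation.ReflTransGen A a s₀ → a ∉ S →
        ∃ w, w ∉ S ∧ ∃ s ∈ S, A w s := by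
      intro a h
      induction h using Relation.ReflTransGen.head_induction_on with
      | refl => intro h'; exact absurd hs₀ h'
      | @head t d harc hpath ih =>
        intro ht
        by_cases hd : d ∈ S
        · exact ⟨t, ht, d, hd, harc⟩
        · exact ih hd
    have crossOut : ∀ a : V, Relation.ReflTransGen A s₀ a → a ∉ S →
        ∃ w, w ∉ S ∧ ∃ s ∈ S, A s w := by
      intro a h
      induction h with
      | refl => intro h'; exact absurd hs₀ h'
      | @tail m e hpath harc ih =>
        intro he
        by_cases hm : m ∈ S
        · exact ⟨e, he, m, hm, harc⟩
        · exact ih hm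
    obtain ⟨y1, hy1S, sy, hsy, hy1arc⟩ := crossIn z₀ (hstrong z₀ s₀) hz₀
    have hy1 : ∀ s ∈ S, A y1 s := by
      rcases hhomog y1 hy1S with h | h
      · exfalso
        rcases htour y1 sy (fun h' => hy1S (h' ▸ hsy)) with ⟨-, hn⟩ | ⟨-, hn⟩
        · exact hn (h sy hsy)
        · exact hn hy1arc
      · exact h
    obtain ⟨x1, hx1S, sx, hsx, hx1arc⟩ := crossOut z₀ (hstrong s₀ z₀) hz₀
    have hx1 : ∀ s ∈ S, A s x1 := by
      rcases hhomog x1 hx1S with h | h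
      · exact h
      · exfalso
        rcases htour sx x1 (fun h' => hx1S (h'.symm ▸ hsx)) with ⟨-, hn⟩ | ⟨-, hn⟩
        · exact hn (h sx hsx)
        · exact hn hx1arc
    have crossXY : ∀ a : V, Relation.ReflTransGen A a y1 → a ∉ S → (∀ s ∈ S, A s a) →
        ∃ xx yy, xx ∉ S ∧ (∀ s ∈ S, A s xx) ∧ yy ∉ S ∧ (∀ s ∈ S, A yy s) ∧ A xx yy := by
      intro a h
      induction h using Relation.ReflTransGen.head_induction_on with
      | refl =>
        intro hy hX
        exfalso
        rcases htour y1 s₀ (fun h' => hy (h' ▸ hs₀)) with ⟨-, hn⟩ | ⟨-, hn⟩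
        · exact hn (hX s₀ hs₀)
        · exact hn (hy1 s₀ hs₀)
      | @head t d harc hpath ih =>
        intro ht hXt
        by_cases hd : d ∈ S
        · exfalso
          rcases htour t d (fun h' => ht (h' ▸ hd)) with ⟨-, hn⟩ | ⟨-, hn⟩
          · exact hn (hXt d hd)
          · exact hn harc
        · rcases hhomog d hd with hdx | hdy
          · exact ih hd hdx
          · exact ⟨t, d, ht, hXt, hd, hdy, harc⟩
    obtain ⟨x, y, hxS, hXx, hyS, hYy, hxy2⟩ := crossXY x1 (hstrong x1 y1) hx1S hx1
    have hxyne : x ≠ y := ne_of_arc hxy2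
    by_cases hgrow : S.card + 2 ≤ Fintype.card V - 1
    · exfalso
      have hxT : x ∉ insert y S := by simp [hxyne, hxS]
      have hTstrong : StrongOn A (insert x (insert y S)) := by
        have hxm : x ∈ insert x (insert y S) := Finset.mem_insert_self _ _
        have hym : y ∈ insert x (insert y S) := by simp
        have hsm : ∀ {s : V}, s ∈ S → s ∈ insert x (insert y S) := fun hs => by
          simp [Finset.mem_insert_of_mem, hs]
        have harc : ∀ {a e : V}, A a e → a ∈ insert x (insert y S) →
            e ∈ insert x (insert y S) →
            Relation.ReflTransGen
              (fun s t => A s t ∧ s ∈ insert x (insert y S) ∧ t ∈ insert x (insert y S)) a e :=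
          fun h ha he => Relation.ReflTransGen.single ⟨h, ha, he⟩
        have liftS : ∀ {a e : V}, a ∈ S → e ∈ S →
            Relation.ReflTransGen
              (fun s t => A s t ∧ s ∈ insert x (insert y S) ∧ t ∈ insert x (insert y S)) a e :=
          fun ha he => Relation.ReflTransGen.mono
            (fun s t (h' : _ ∧ _ ∈ S ∧ _ ∈ S) => ⟨h'.1, hsm h'.2.1, hsm h'.2.2⟩) _ _ (hSstrong _ ha _ he)
        intro a ha e he
        rcases Finset.mem_insert.mp ha with rfl | ha1
        · rcases Finset.mem_insert.mp he with rfl | he1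
          · exact Relation.ReflTransGen.refl
          · rcases Finset.mem_insert.mp he1 with rfl | he2
            · exact harc hxy2 hxm hym
            · exact (harc hxy2 hxm hym).trans (harc (hYy e he2) hym (hsm he2))
        · rcases Finset.mem_insert.mp ha1 with rfl | ha2
          · rcases Finset.mem_insert.mp he with rfl | he1
            · exact (harc (hYy s₀ hs₀) hym (hsm hs₀)).trans
                (harc (hXx s₀ hs₀) (hsm hs₀) hxm)
            · rcases Finset.mem_insert.mp he1 with rfl | he2
              · exact Relation.ReflTransGen.refl
              · exact harc (hYy e he2) hym (hsm he2)
          · rcases Finset.mem_insert.mp he with rfl | he1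
            · exact harc (hXx a ha2) (hsm ha2) hxm
            · rcases Finset.mem_insert.mp he1 with rfl | he2
              · exact (harc (hXx a ha2) (hsm ha2) hxm).trans (harc hxy2 hxm hym)
              · exact liftS ha2 he2
      have hcge : (insert x (insert y S)).card ≤ S.card := by
        refine hmax _ ⟨⟨x, Finset.mem_insert_self _ _⟩, ?_, hTstrong⟩
        rw [Finset.card_insert_of_notMem hxT, Finset.card_insert_of_notMem hyS]
        omega
      rw [Finset.card_insert_of_notMem hxT, Finset.card_insert_of_notMem hyS] at hcge
      omega
    · have hcards : S.card = Fintype.card V - 2 := by omega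
      have houts : ∀ w, w ∉ S → w = x ∨ w = y := by
        intro w hw
        by_contra h
        push_neg at h
        obtain ⟨hwx, hwy⟩ := h
        have hxT : x ∉ insert y S := by simp [hxyne, hxS]
        have hwT : w ∉ insert x (insert y S) := by simp [hwx, hwy, hw]
        have hc3 : (insert w (insert x (insert y S))).card = S.card + 3 := by
          rw [Finset.card_insert_of_notMem hwT, Finset.card_insert_of_notMem hxT,
            Finset.card_insert_of_notMem hyS]
        have hle := Finset.card_le_univ (insert w (insert x (insert y S)))
        omega
      have hcard2 : 1 < S.card := by omega
      obtain ⟨s₁, hs₁, hs₁ne⟩ := Finset.exists_mem_ne hcard2 s₀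
      have hxs₀ : x ≠ s₀ := fun h => hxS (h ▸ hs₀)
      have hys₀ : y ≠ s₀ := fun h => hyS (h ▸ hs₀)
      refine ⟨s₀, fun a e => ?_⟩
      have toX : ∀ a : {w : V // w ≠ s₀},
          Relation.ReflTransGen (fun s t : {w : V // w ≠ s₀} => A s.1 t.1) a ⟨x, hxs₀⟩ := by
        intro a
        by_cases haS : a.1 ∈ S
        · exact Relation.ReflTransGen.single (hXx a.1 haS)
        · rcases houts a.1 haS with h | h
          · rw [show a = (⟨x, hxs₀⟩ : {w : V // w ≠ s₀}) from Subtype.ext h]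
          · exact Relation.ReflTransGen.head (b := ⟨s₁, hs₁ne⟩)
              (show A a.1 s₁ by rw [h]; exact hYy s₁ hs₁)
              (Relation.ReflTransGen.single (hXx s₁ hs₁))
      have fromX : ∀ e : {w : V // w ≠ s₀},
          Relation.ReflTransGen (fun s t : {w : V // w ≠ s₀} => A s.1 t.1) ⟨x, hxs₀⟩ e := by
        intro e
        by_cases heS : e.1 ∈ S
        · exact Relation.ReflTransGen.head (b := ⟨y, hys₀⟩) hxy2
            (Relation.ReflTransGen.single (hYy e.1 heS))
        · rcases houts e.1 heS with h | h
          · rw [show e = (⟨x, hxs₀⟩ : {w : V // w ≠ s₀}) from Subtype.ext h]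
          · exact Relation.ReflTransGen.single (show A x e.1 by rw [h]; exact hxy2)
      exact (toX a).trans (fromX e)

theorem base4core [Fintype V] {A : V → V → Prop}
    (htour : ∀ u v : V, u ≠ v → Xor' (A u v) (A v u)) (hirr : ∀ v, ¬ A v v)
    (hstrong : ∀ u v : V, Relation.ReflTransGen A u v)
    {b c1 c2 z : V} (huniv : ∀ w : V, w = b ∨ w = c1 ∨ w = c2 ∨ w = z)
    (hzb' : z ≠ b) (hzc1' : z ≠ c1) (hzc2' : z ≠ c2)
    (h1 : A b c1) (h2 : A c1 c2) (h3 : A c2 b) (h4 : A z b) :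
    ∃ b' c, GoodAt A b' c := by
  classical
  have ne_of_arc : ∀ {a w : V}, A a w → a ≠ w := fun h h' => hirr _ (h' ▸ h)
  have hbc1 : b ≠ c1 := ne_of_arc h1
  have hc1b : c1 ≠ b := hbc1.symm
  have hc1c2 : c1 ≠ c2 := ne_of_arc h2
  have hc2c1 : c2 ≠ c1 := hc1c2.symm
  have hc2b : c2 ≠ b := ne_of_arc h3
  have hbc2 : b ≠ c2 := hc2b.symm
  have hbz : b ≠ z := hzb'.symm
  have hc1z : c1 ≠ z := hzc1'.symm
  have hc2z' : c2 ≠ z := hzc2'.symm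
  rcases htour c1 z hc1z with ⟨hc1z2, -⟩ | ⟨hzc1, -⟩
  · rcases htour z c2 hzc2' with ⟨hzc2, -⟩ | ⟨hc2z, -⟩
    · -- color-1 arcs: (b,c1), (c1,z), (z,c2)
      refine ⟨b, fun a w =>
        if (a = b ∧ w = c1) ∨ (a = c1 ∧ w = z) ∨ (a = z ∧ w = c2) then 1 else 0, ?_, ?_⟩
      · intro v hv
        rcases huniv v with rfl | rfl | rfl | rfl
        · exact absurd rfl hv
        · exact Relation.TransGen.head
            ⟨h2, by simp [hbc1, hc1b, hc1c2, hc2c1, hc2b, hbc2, hbz, hzb', hc1z, hzc1', hc2z', hzc2']⟩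
            (Relation.TransGen.single
            ⟨h3, by simp [hbc1, hc1b, hc1c2, hc2c1, hc2b, hbc2, hbz, hzb', hc1z, hzc1', hc2z', hzc2']⟩)
        · exact Relation.TransGen.single
            ⟨h3, by simp [hbc1, hc1b, hc1c2, hc2c1, hc2b, hbc2, hbz, hzb', hc1z, hzc1', hc2z', hzc2']⟩
        · exact Relation.TransGen.single
            ⟨h4, by simp [hbc1, hc1b, hc1c2, hc2c1, hc2b, hbc2, hbz, hzb', hc1z, hzc1', hc2z', hzc2']⟩
      · intro v hv
        rcases huniv v with rfl | rfl | rfl | rfl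
        · exact absurd rfl hv
        · exact Relation.TransGen.single ⟨h1, by simp⟩
        · exact Relation.TransGen.head ⟨h1, by simp⟩
            (Relation.TransGen.head
              ⟨hc1z2, by simp [hbc1, hc1b, hc1c2, hc2c1, hc2b, hbc2, hbz, hzb', hc1z, hzc1', hc2z', hzc2']⟩
              (Relation.TransGen.single
              ⟨hzc2, by simp [hbc1, hc1b, hc1c2, hc2c1, hc2b, hbc2, hbz, hzb', hc1z, hzc1', hc2z', hzc2']⟩))
        · exact Relation.TransGen.head ⟨h1, by simp⟩
            (Relation.TransGen.single
            ⟨hc1z2, by simp [hbc1, hc1b, hc1c2, hc2c1, hc2b, hbc2, hbz, hzb', hc1z, hzc1', hc2z', hzc2']⟩)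
    · -- color-1 arcs: (b,c1), (c1,c2), (c2,z)
      refine ⟨b, fun a w =>
        if (a = b ∧ w = c1) ∨ (a = c1 ∧ w = c2) ∨ (a = c2 ∧ w = z) then 1 else 0, ?_, ?_⟩
      · intro v hv
        rcases huniv v with rfl | rfl | rfl | rfl
        · exact absurd rfl hv
        · exact Relation.TransGen.head
            ⟨hc1z2, by simp [hbc1, hc1b, hc1c2, hc2c1, hc2b, hbc2, hbz, hzb', hc1z, hzc1', hc2z', hzc2']⟩
            (Relation.TransGen.single
            ⟨h4, by simp [hbc1, hc1b, hc1c2, hc2c1, hc2b, hbc2, hbz, hzb', hc1z, hzc1', hc2z', hzc2']⟩)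
        · exact Relation.TransGen.single
            ⟨h3, by simp [hbc1, hc1b, hc1c2, hc2c1, hc2b, hbc2, hbz, hzb', hc1z, hzc1', hc2z', hzc2']⟩
        · exact Relation.TransGen.single
            ⟨h4, by simp [hbc1, hc1b, hc1c2, hc2c1, hc2b, hbc2, hbz, hzb', hc1z, hzc1', hc2z', hzc2']⟩
      · intro v hv
        rcases huniv v with rfl | rfl | rfl | rfl
        · exact absurd rfl hv
        · exact Relation.TransGen.single ⟨h1, by simp⟩
        · exact Relation.TransGen.head ⟨h1, by simp⟩
            (Relation.TransGen.single
            ⟨h2, by simp [hbc1, hc1b, hc1c2, hc2c1, hc2b, hbc2, hbz, hzb', hc1z, hzc1', hc2z', hzc2']⟩)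
        · exact Relation.TransGen.head ⟨h1, by simp⟩
            (Relation.TransGen.head
              ⟨h2, by simp [hbc1, hc1b, hc1c2, hc2c1, hc2b, hbc2, hbz, hzb', hc1z, hzc1', hc2z', hzc2']⟩
              (Relation.TransGen.single
              ⟨hc2z, by simp [hbc1, hc1b, hc1c2, hc2c1, hc2b, hbc2, hbz, hzb', hc1z, hzc1', hc2z', hzc2']⟩))
  · -- A z c1 : derive A c2 z, root c2, color-1 arcs: (c2,b), (c2,z), (z,c1)
    have hc2z : A c2 z := by
      obtain ⟨p, hpz⟩ := exists_in hstrong hbz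
      rcases huniv p with rfl | rfl | rfl | rfl
      · rcases htour z p hzb' with ⟨-, hn⟩ | ⟨-, hn⟩
        · exact absurd hpz hn
        · exact absurd h4 hn
      · rcases htour z p hzc1' with ⟨-, hn⟩ | ⟨-, hn⟩
        · exact absurd hpz hn
        · exact absurd hzc1 hn
      · exact hpz
      · exact absurd hpz (hirr _)
    refine ⟨c2, fun a w =>
      if (a = c2 ∧ w = b) ∨ (a = c2 ∧ w = z) ∨ (a = z ∧ w = c1) then 1 else 0, ?_, ?_⟩
    · intro v hv
      rcases huniv v with rfl | rfl | rfl | rfl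
      · exact Relation.TransGen.head
          ⟨h1, by simp [hbc1, hc1b, hc1c2, hc2c1, hc2b, hbc2, hbz, hzb', hc1z, hzc1', hc2z', hzc2']⟩
          (Relation.TransGen.single
          ⟨h2, by simp [hbc1, hc1b, hc1c2, hc2c1, hc2b, hbc2, hbz, hzb', hc1z, hzc1', hc2z', hzc2']⟩)
      · exact Relation.TransGen.single
          ⟨h2, by simp [hbc1, hc1b, hc1c2, hc2c1, hc2b, hbc2, hbz, hzb', hc1z, hzc1', hc2z', hzc2']⟩
      · exact absurd rfl hv
      · exact Relation.TransGen.head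
          ⟨h4, by simp [hbc1, hc1b, hc1c2, hc2c1, hc2b, hbc2, hbz, hzb', hc1z, hzc1', hc2z', hzc2']⟩
          (Relation.TransGen.head
            ⟨h1, by simp [hbc1, hc1b, hc1c2, hc2c1, hc2b, hbc2, hbz, hzb', hc1z, hzc1', hc2z', hzc2']⟩
            (Relation.TransGen.single
            ⟨h2, by simp [hbc1, hc1b, hc1c2, hc2c1, hc2b, hbc2, hbz, hzb', hc1z, hzc1', hc2z', hzc2']⟩))
    · intro v hv
      rcases huniv v with rfl | rfl | rfl | rfl
      · exact Relation.TransGen.single ⟨h3, by simp [hc2b, hbc1, hbz, hc2z', hzc1']⟩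
      · exact Relation.TransGen.head
          ⟨hc2z, by simp [hbc1, hc1b, hc1c2, hc2c1, hc2b, hbc2, hbz, hzb', hc1z, hzc1', hc2z', hzc2']⟩
          (Relation.TransGen.single
          ⟨hzc1, by simp [hbc1, hc1b, hc1c2, hc2c1, hc2b, hbc2, hbz, hzb', hc1z, hzc1', hc2z', hzc2']⟩)
      · exact absurd rfl hv
      · exact Relation.TransGen.single
          ⟨hc2z, by simp [hbc1, hc1b, hc1c2, hc2c1, hc2b, hbc2, hbz, hzb', hc1z, hzc1', hc2z', hzc2']⟩

theorem base4 [Fintype V] {A : V → V → Prop}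
    (htour : ∀ u v : V, u ≠ v → Xor' (A u v) (A v u)) (hirr : ∀ v, ¬ A v v)
    (hcard : Fintype.card V = 4)
    (hstrong : ∀ u v : V, Relation.ReflTransGen A u v) :
    ∃ b c, GoodAt A b c := by
  classical
  have ne_of_arc : ∀ {a w : V}, A a w → a ≠ w := fun h h' => hirr _ (h' ▸ h)
  have hpair : ∃ a b : V, a ≠ b := by
    have h1 : 1 < Fintype.card V := by omega
    have hne : Nonempty V := Fintype.card_pos_iff.mp (by omega)
    obtain ⟨a0⟩ := hne
    obtain ⟨a, ha⟩ := Fintype.exists_ne_of_one_lt_card h1 a0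
    exact ⟨a, _, ha⟩
  obtain ⟨u, x, y, hux, hxy, hyu⟩ := exists_triangle htour hirr hstrong hpair
  have hux' : u ≠ x := ne_of_arc hux
  have hxy' : x ≠ y := ne_of_arc hxy
  have hyu' : y ≠ u := ne_of_arc hyu
  obtain ⟨z, hz⟩ : ∃ z, z ∉ ({u, x, y} : Finset V) := by
    by_contra h
    push_neg at h
    have hsub : (Finset.univ : Finset V) ⊆ {u, x, y} := fun w _ => h w
    have hle : Fintype.card V ≤ ({u, x, y} : Finset V).card := by
      simpa using Finset.card_le_card hsub
    have hxy2 : ({x, y} : Finset V).card ≤ 2 :=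
      (Finset.card_insert_le _ _).trans (by simp)
    have h3 : ({u, x, y} : Finset V).card ≤ 3 :=
      (Finset.card_insert_le _ _).trans (by omega)
    omega
  simp only [Finset.mem_insert, Finset.mem_singleton, not_or] at hz
  obtain ⟨hzu, hzx, hzy⟩ := hz
  have huniv4 : ∀ w : V, w = u ∨ w = x ∨ w = y ∨ w = z := by
    intro w
    by_contra hw
    push_neg at hw
    obtain ⟨e1, e2, e3, e4⟩ := hw
    have hc5 : ({w, u, x, y, z} : Finset V).card = 5 := by
      rw [Finset.card_insert_of_notMem (by simp [e1, e2, e3, e4]),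
          Finset.card_insert_of_notMem (by simp [hux', hyu'.symm, Ne.symm hzu]),
          Finset.card_insert_of_notMem (by simp [hxy', Ne.symm hzx]),
          Finset.card_insert_of_notMem (by simp [Ne.symm hzy]),
          Finset.card_singleton]
    have hle := Finset.card_le_univ ({w, u, x, y, z} : Finset V)
    omega
  obtain ⟨q, hzq⟩ := exists_out hstrong hzu
  have hqz : q ≠ z := (ne_of_arc hzq).symm
  rcases huniv4 q with hq | hq | hq | hq
  · exact base4core htour hirr hstrong huniv4 hzu hzx hzy hux hxy hyu (hq ▸ hzq)
  · refine base4core htour hirr hstrong (fun w => ?_) hzx hzy hzu hxy hyu hux (hq ▸ hzq)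
    rcases huniv4 w with h | h | h | h
    · exact Or.inr (Or.inr (Or.inl h))
    · exact Or.inl h
    · exact Or.inr (Or.inl h)
    · exact Or.inr (Or.inr (Or.inr h))
  · refine base4core htour hirr hstrong (fun w => ?_) hzy hzu hzx hyu hux hxy (hq ▸ hzq)
    rcases huniv4 w with h | h | h | h
    · exact Or.inr (Or.inl h)
    · exact Or.inr (Or.inr (Or.inl h))
    · exact Or.inl h
    · exact Or.inr (Or.inr (Or.inr h))
  · exact absurd hq hqz

noncomputable def extendColor [DecidableEq V] (v p : V)
    (c' : {w : V // w ≠ v} → {w : V // w ≠ v} → Fin 2) : V → V → Fin 2 :=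
  fun a w =>
    if ha : a = v then 0
    else if hw : w = v then (if a = p then 1 else 0)
    else c' ⟨a, ha⟩ ⟨w, hw⟩

theorem extendColor_ne [DecidableEq V] {v p : V}
    {c' : {w : V // w ≠ v} → {w : V // w ≠ v} → Fin 2} {a w : V} (ha : a ≠ v) (hw : w ≠ v) :
    extendColor v p c' a w = c' ⟨a, ha⟩ ⟨w, hw⟩ := by
  simp [extendColor, ha, hw]

theorem extendColor_from [DecidableEq V] {v p : V}
    {c' : {w : V // w ≠ v} → {w : V // w ≠ v} → Fin 2} (w : V) :
    extendColor v p c' v w = 0 := by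
  simp [extendColor]

theorem extendColor_to [DecidableEq V] {v p : V}
    {c' : {w : V // w ≠ v} → {w : V // w ≠ v} → Fin 2} (hp : p ≠ v) :
    extendColor v p c' p v = 1 := by
  simp [extendColor, hp]

theorem strong_good : ∀ (n : ℕ), 4 ≤ n → ∀ (V : Type*) [Fintype V] (A : V → V → Prop),
    (∀ u v : V, u ≠ v → Xor' (A u v) (A v u)) → (∀ v, ¬ A v v) →
    Fintype.card V = n → (∀ u v : V, Relation.ReflTransGen A u v) →
    ∃ b c, GoodAt A b c := by
  intro n
  induction n using Nat.strong_induction_on with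
  | _ n IH =>
    intro h4 V _ A htour hirr hcard hstrong
    rcases eq_or_lt_of_le h4 with hn4 | hn5
    · exact base4 htour hirr (hcard.trans hn4.symm) hstrong
    · classical
      have h5 : 5 ≤ Fintype.card V := by rw [hcard]; omega
      obtain ⟨v, hvs⟩ := delete_vertex_strong htour hirr h5 hstrong
      have hcW : Fintype.card {w : V // w ≠ v} = n - 1 := by
        rw [Fintype.card_subtype_compl, Fintype.card_subtype_eq, hcard]
      have htour' : ∀ a b : {w : V // w ≠ v}, a ≠ b → Xor' (A a.1 b.1) (A b.1 a.1) :=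
        fun a b h => htour a.1 b.1 (fun hh => h (Subtype.ext hh))
      have hirr' : ∀ a : {w : V // w ≠ v}, ¬ A a.1 a.1 := fun a => hirr a.1
      obtain ⟨b', c', hg0, hg1⟩ := IH (n - 1) (by omega) (by omega) {w : V // w ≠ v}
        (fun s t : {w : V // w ≠ v} => A s.1 t.1) htour' hirr' hcW hvs
      have hex : ∃ w : V, w ≠ v := by
        have h1 : 1 < Fintype.card V := by omega
        exact Fintype.exists_ne_of_one_lt_card h1 v
      obtain ⟨w₀, hw₀⟩ := hex
      obtain ⟨q, hvq⟩ := exists_out hstrong (Ne.symm hw₀)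
      obtain ⟨p, hpv⟩ := exists_in hstrong hw₀
      have hqv : q ≠ v := fun h => hirr v (h ▸ hvq)
      have hpv' : p ≠ v := fun h => hirr v (h ▸ hpv)
      have lift : ∀ (i : Fin 2) (a e : {w : V // w ≠ v}),
          Relation.TransGen (fun s t : {w : V // w ≠ v} => A s.1 t.1 ∧ c' s t = i) a e →
          Relation.TransGen (fun s t : V => A s t ∧ extendColor v p c' s t = i) a.1 e.1 := by
        intro i a e h
        induction h with
        | @single m h' =>
          exact Relation.TransGen.single ⟨h'.1, by rw [extendColor_ne a.2 m.2]; exact h'.2⟩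
        | @tail m e' hpath h' ih =>
          exact Relation.TransGen.tail ih ⟨h'.1, by rw [extendColor_ne m.2 e'.2]; exact h'.2⟩
      refine ⟨b'.1, extendColor v p c', ?_, ?_⟩
      · intro t ht
        by_cases htv : t = v
        · subst htv
          by_cases hqb : q = b'.1
          · exact hqb ▸ Relation.TransGen.single ⟨hvq, extendColor_from q⟩
          · exact Relation.TransGen.head ⟨hvq, extendColor_from q⟩
              (lift 0 ⟨q, hqv⟩ b' (hg0 ⟨q, hqv⟩ (fun h => hqb (congrArg Subtype.val h))))
        · exact lift 0 ⟨t, htv⟩ b' (hg0 ⟨t, htv⟩ (fun h => ht (congrArg Subtype.val h)))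
      · intro t ht
        by_cases htv : t = v
        · subst htv
          by_cases hpb : p = b'.1
          · exact hpb ▸ Relation.TransGen.single ⟨hpv, extendColor_to hpv'⟩
          · exact Relation.TransGen.tail
              (lift 1 b' ⟨p, hpv'⟩ (hg1 ⟨p, hpv'⟩ (fun h => hpb (congrArg Subtype.val h))))
              ⟨hpv, extendColor_to hpv'⟩
        · exact lift 1 b' ⟨t, htv⟩ (hg1 ⟨t, htv⟩ (fun h => ht (congrArg Subtype.val h)))

end BKAux

/-- A tournament with at least 4 vertices is BK-colorable iff it is strongly
connected. -/
theorem tournament_bk_colorable_iff {V : Type*} [Fintype V] (A : V → V → Prop)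
    (htour : ∀ u v : V, u ≠ v → Xor' (A u v) (A v u)) (hirr : ∀ v, ¬ A v v)
    (hcard : 4 ≤ Fintype.card V) :
    BKColorable A ↔ ∀ u v : V, Relation.ReflTransGen A u v := by
  constructor
  · exact fun h => BKAux.bk_strong htour h
  · intro hstrong
    obtain ⟨b, c, hgood⟩ := BKAux.strong_good (Fintype.card V) hcard V A htour hirr rfl hstrong
    exact BKAux.good_bk hgood
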